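/- Any λ-structure on a commutative ring R determines a power structure: every series A(t) ∈ 1 + t·R[[t]] can be written uniquely as an infinite product ∏_{k≥1} λ_{b_k}(t^k) with b_k ∈ R, where λ_b(t) = 1 + bt + O(t²) is the λ-series; setting A(t)^m := ∏_{k≥1} λ_{m·b_k}(t^k) is well-defined. -/

import Mathlib

/-- Substitution `t ↦ t^k` in a power series. -/
noncomputable def expandPS {R : Type} [CommRing R] (k : ℕ) (A : PowerSeries R) :
    PowerSeries R :=
  PowerSeries.mk fun n => if k ∣ n then PowerSeries.coeff (R := R) (n / k) A else 0

lemma coeff_expandPS {R : Type} [CommRing R] (k n : ℕ) (A : PowerSeries R) :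
    PowerSeries.coeff (R := R) n (expandPS k A) =
      if k ∣ n then PowerSeries.coeff (R := R) (n / k) A else 0 := by
  simp [expandPS]

/-- bAux recursive definition of the coefficients -/
noncomputable def bAux {R : Type} [CommRing R] (lam : R → PowerSeries R)
    (A : PowerSeries R) : ℕ → R
  | 0 => 0
  | (N+1) => PowerSeries.coeff (R := R) (N+1) A -
      PowerSeries.coeff (R := R) (N+1)
        (∏ k ∈ (Finset.Icc 1 N).attach, expandPS k.1 (lam (bAux lam A k.1)))
  decreasing_by exact Nat.lt_succ_of_le (Finset.mem_Icc.mp k.2).2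

lemma key_step {R : Type} [CommRing R] (lam : R → PowerSeries R)
    (hconst : ∀ a : R, PowerSeries.coeff (R := R) 0 (lam a) = 1)
    (hlin : ∀ a : R, PowerSeries.coeff (R := R) 1 (lam a) = a)
    (b : ℕ → R) (N : ℕ) :
    PowerSeries.coeff (R := R) (N+1) (∏ k ∈ Finset.Icc 1 (N+1), expandPS k (lam (b k))) =
      PowerSeries.coeff (R := R) (N+1) (∏ k ∈ Finset.Icc 1 N, expandPS k (lam (b k))) + b (N+1) := by
  set P := ∏ k ∈ Finset.Icc 1 N, expandPS k (lam (b k)) with hP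
  have hP0 : PowerSeries.coeff (R := R) 0 P = 1 := by
    rw [hP]
    rw [PowerSeries.coeff_zero_eq_constantCoeff, map_prod]
    refine Finset.prod_eq_one fun k hk => ?_
    rw [← PowerSeries.coeff_zero_eq_constantCoeff_apply, coeff_expandPS]
    simp [hconst]
  have hsplit : Finset.Icc 1 (N+1) = insert (N+1) (Finset.Icc 1 N) := by
    ext i; simp [Finset.mem_Icc, Finset.mem_insert]; omega
  rw [hsplit, Finset.prod_insert (by simp), PowerSeries.coeff_mul,
    Finset.Nat.sum_antidiagonal_eq_sum_range_succ_mk]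
  have hterm : ∀ i ∈ Finset.range (N+2),
      PowerSeries.coeff (R := R) i (expandPS (N+1) (lam (b (N+1)))) *
        PowerSeries.coeff (R := R) (N+1-i) P =
      (if i = 0 then PowerSeries.coeff (R := R) (N+1) P else 0) +
      (if i = N+1 then b (N+1) else 0) := by
    intro i hi
    rw [Finset.mem_range] at hi
    rcases Nat.eq_zero_or_pos i with rfl | hipos
    · simp [coeff_expandPS, hconst]
    rcases eq_or_ne i (N+1) with rfl | hne
    · simp [coeff_expandPS, Nat.div_self (Nat.succ_pos N), hlin, hP0]
    · have hndvd : ¬ (N+1) ∣ i := by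
        intro h
        rcases h with ⟨c, rfl⟩
        rcases c with _ | c
        · omega
        · have : N + 1 ≤ (N+1) * (c+1) := Nat.le_mul_of_pos_right _ (Nat.succ_pos c)
          omega
      simp [coeff_expandPS, hndvd, hipos.ne', hne]
  rw [Finset.sum_congr rfl hterm, Finset.sum_add_distrib]
  rw [Finset.sum_ite_eq' (Finset.range (N+2)) 0 (fun _ => PowerSeries.coeff (R := R) (N+1) P),
    Finset.sum_ite_eq' (Finset.range (N+2)) (N+1) (fun _ => b (N+1))]
  simp

/-- A λ-structure on `R` determines a power structure: every `A(t) ∈ 1 + t·R[[t]]`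
factors uniquely as `∏_{k≥1} λ_{b_k}(t^k)` (the product converging `t`-adically, i.e.
coefficientwise via the finite partial products). -/
theorem lambdaStructure_unique_factorization (R : Type) [CommRing R]
    (lam : R → PowerSeries R)
    (hmul : ∀ a b : R, lam (a + b) = lam a * lam b)
    (hconst : ∀ a : R, PowerSeries.coeff (R := R) 0 (lam a) = 1)
    (hlin : ∀ a : R, PowerSeries.coeff (R := R) 1 (lam a) = a)
    (A : PowerSeries R) (hA : PowerSeries.coeff (R := R) 0 A = 1) :
    ∃! b : ℕ → R, b 0 = 0 ∧ ∀ N : ℕ,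
      PowerSeries.coeff (R := R) N A =
        PowerSeries.coeff (R := R) N (∏ k ∈ Finset.Icc 1 N, expandPS k (lam (b k))) := by
  set b := bAux lam A with hb
  have hbdef : ∀ N : ℕ, b (N+1) = PowerSeries.coeff (R := R) (N+1) A -
      PowerSeries.coeff (R := R) (N+1) (∏ k ∈ Finset.Icc 1 N, expandPS k (lam (b k))) := by
    intro N
    rw [hb]
    rw [bAux]
    congr 1
    rw [← Finset.prod_attach (Finset.Icc 1 N) (fun k => expandPS k (lam (bAux lam A k)))]
  have hbsat : ∀ N : ℕ, PowerSeries.coeff (R := R) N A =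
      PowerSeries.coeff (R := R) N (∏ k ∈ Finset.Icc 1 N, expandPS k (lam (b k))) := by
    intro N
    cases N with
    | zero => simp [hA]
    | succ M =>
        rw [key_step lam hconst hlin b M, hbdef M]
        ring
  have hb0 : b 0 = 0 := by rw [hb, bAux]
  refine ⟨b, ⟨hb0, hbsat⟩, ?_⟩
  rintro c ⟨hc0, hcsat⟩
  funext N
  induction N using Nat.strong_induction_on with
  | _ N ih =>
    cases N with
    | zero => rw [hc0, hb0]
    | succ M =>
        have hprod : (∏ k ∈ Finset.Icc 1 M, expandPS k (lam (c k))) =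
            ∏ k ∈ Finset.Icc 1 M, expandPS k (lam (b k)) := by
          refine Finset.prod_congr rfl fun k hk => ?_
          rw [ih k (by rw [Finset.mem_Icc] at hk; omega)]
        have h1 := hcsat (M+1)
        have h2 := hbsat (M+1)
        rw [key_step lam hconst hlin c M, hprod] at h1
        rw [key_step lam hconst hlin b M] at h2
        have := h1.symm.trans h2
        exact add_left_cancel this
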